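/- Let φ : (0,∞) → [0,∞) be nonincreasing and let (α_n)_{n∈ℤ} be real numbers such that for all integers k < ℓ, |∑_{j=k}^{ℓ−1} 2^j α_j| ≤ 2^k φ(2^k) + 2^ℓ φ(2^ℓ). Then there exist real numbers (β_n)_{n∈ℤ} such that α_n = β_{n−1} − 2β_n and |β_n| ≤ φ(2^n) for all n ∈ ℤ. -/

import Mathlib

/-- The key scalar lemma: if the dyadic partial sums `∑_{j=k}^{ℓ-1} 2^j α_j` are
controlled by `2^k φ(2^k) + 2^ℓ φ(2^ℓ)` for a nonnegative nonincreasing `φ`, then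
there exist reals `β_n` with `α_n = β_{n-1} - 2 β_n` and `|β_n| ≤ φ(2^n)`. -/
theorem stmt_2 (φ : ℝ → ℝ) (α : ℤ → ℝ)
    (hφ0 : ∀ t : ℝ, 0 < t → 0 ≤ φ t)
    (hφa : ∀ s t : ℝ, 0 < s → s ≤ t → φ t ≤ φ s)
    (hα : ∀ k ℓ : ℤ, k < ℓ →
      |∑ j ∈ Finset.Icc k (ℓ - 1), (2:ℝ) ^ j * α j| ≤
        (2:ℝ) ^ k * φ ((2:ℝ) ^ k) + (2:ℝ) ^ ℓ * φ ((2:ℝ) ^ ℓ)) :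
    ∃ β : ℤ → ℝ, ∀ n : ℤ,
      α n = β (n - 1) - 2 * β n ∧ |β n| ≤ φ ((2:ℝ) ^ n) := by
  classical
  -- positivity of powers
  have h2pos : ∀ n : ℤ, (0:ℝ) < (2:ℝ) ^ n := fun n => zpow_pos (by norm_num) n
  -- cumulative sums
  set v : ℤ → ℝ := fun n =>
    if 0 ≤ n then ∑ j ∈ Finset.Icc 1 n, (2:ℝ) ^ j * α j
    else -∑ j ∈ Finset.Icc (n+1) 0, (2:ℝ) ^ j * α j with hv
  -- insert lemma for Icc at the top
  have hins_top : ∀ a b : ℤ, a ≤ b →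
      Finset.Icc a b = insert b (Finset.Icc a (b-1)) := by
    intro a b hab
    ext x
    simp only [Finset.mem_Icc, Finset.mem_insert]
    omega
  have hnotmem_top : ∀ a b : ℤ, b ∉ Finset.Icc a (b-1) := by
    intro a b h; simp only [Finset.mem_Icc] at h; omega
  have hins_bot : ∀ a b : ℤ, a ≤ b →
      Finset.Icc a b = insert a (Finset.Icc (a+1) b) := by
    intro a b hab
    ext x
    simp only [Finset.mem_Icc, Finset.mem_insert]
    omega
  have hnotmem_bot : ∀ a b : ℤ, a ∉ Finset.Icc (a+1) b := by
    intro a b h; simp only [Finset.mem_Icc] at h; omega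
  -- step identity
  have hstep : ∀ n : ℤ, v n = v (n-1) + (2:ℝ) ^ n * α n := by
    intro n
    rcases lt_trichotomy n 0 with hn | hn | hn
    · have h1 : ¬ (0 ≤ n) := by omega
      have h2 : ¬ (0 ≤ n - 1) := by omega
      simp only [hv, h1, h2, if_neg, if_false]
      have : Finset.Icc (n-1+1) 0 = insert n (Finset.Icc (n+1) 0) := by
        have := hins_bot n 0 (by omega)
        simpa using this
      rw [this, Finset.sum_insert (hnotmem_bot n 0)]
      ring
    · subst hn
      have h2 : ¬ ((0:ℤ) ≤ 0 - 1) := by omega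
      simp only [hv, le_refl, if_true, h2, if_false]
      norm_num
    · have h1 : (0:ℤ) ≤ n := by omega
      have h2 : (0:ℤ) ≤ n - 1 := by omega
      simp only [hv, h1, h2, if_true]
      rw [hins_top 1 n (by omega), Finset.sum_insert (hnotmem_top 1 n)]
      ring
  -- sum identity
  have hsum : ∀ k ℓ : ℤ, k ≤ ℓ →
      ∑ j ∈ Finset.Icc (k+1) ℓ, (2:ℝ) ^ j * α j = v ℓ - v k := by
    intro k ℓ hkl
    refine Int.le_induction
      (motive := fun ℓ _ => ∑ j ∈ Finset.Icc (k+1) ℓ, (2:ℝ) ^ j * α j = v ℓ - v k) ?_ ?_ ℓ hkl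
    · show ∑ j ∈ Finset.Icc (k+1) k, (2:ℝ) ^ j * α j = v k - v k
      rw [Finset.Icc_eq_empty (by omega)]
      simp
    · intro m hm ih
      have hm1 : m + 1 - 1 = m := by omega
      rw [hins_top (k+1) (m+1) (by omega), hm1,
        Finset.sum_insert (by simpa using hnotmem_top (k+1) (m+1))]
      have hst := hstep (m+1)
      rw [hm1] at hst
      rw [ih]
      linarith
  -- key bound
  set b : ℤ → ℝ := fun n => (2:ℝ) ^ n * φ ((2:ℝ) ^ n) with hb
  have hbnonneg : ∀ n : ℤ, 0 ≤ b n := fun n =>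
    mul_nonneg (h2pos n).le (hφ0 _ (h2pos n))
  have hkey : ∀ k ℓ : ℤ, k < ℓ → |v ℓ - v k| ≤ 2 * (b k + b ℓ) := by
    intro k ℓ hkl
    rw [← hsum k ℓ hkl.le]
    have h1 := hα (k+1) (ℓ+1) (by omega)
    have he : ℓ + 1 - 1 = ℓ := by omega
    rw [he] at h1
    have haux : ∀ k : ℤ, (2:ℝ) ^ (k+1) * φ ((2:ℝ) ^ (k+1)) ≤ 2 * b k := by
      intro k
      have h2k1 : (2:ℝ) ^ (k+1) = 2 * (2:ℝ) ^ k := by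
        rw [zpow_add_one₀ (by norm_num : (2:ℝ) ≠ 0)]; ring
      have hmono : φ ((2:ℝ) ^ (k+1)) ≤ φ ((2:ℝ) ^ k) := hφa _ _ (h2pos k)
        (by rw [h2k1]; nlinarith [h2pos k])
      have hbk : b k = (2:ℝ) ^ k * φ ((2:ℝ) ^ k) := rfl
      rw [hbk, h2k1]
      rw [h2k1] at hmono
      nlinarith [h2pos k]
    have hk := haux k
    have hl := haux ℓ
    calc |∑ j ∈ Finset.Icc (k+1) ℓ, (2:ℝ) ^ j * α j|
        ≤ (2:ℝ) ^ (k+1) * φ ((2:ℝ) ^ (k+1)) + (2:ℝ) ^ (ℓ+1) * φ ((2:ℝ) ^ (ℓ+1)) := h1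
      _ ≤ 2 * (b k + b ℓ) := by linarith
  -- symmetric bound
  have hkey' : ∀ n m : ℤ, |v n - v m| ≤ 2 * (b n + b m) := by
    intro n m
    rcases lt_trichotomy n m with h | h | h
    · have := hkey n m h
      rw [abs_sub_comm] at this
      linarith
    · subst h
      simp only [sub_self, abs_zero]
      nlinarith [hbnonneg n]
    · have := hkey m n h
      linarith
  -- pairwise interval intersection
  have hpair : ∀ n m : ℤ, v n / 2 - b n ≤ v m / 2 + b m := by
    intro n m
    have := hkey' n m
    have := abs_le.mp (hkey' n m)
    linarith [this.1, this.2]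
  set L : Set ℝ := Set.range (fun n : ℤ => v n / 2 - b n) with hL
  have hLne : L.Nonempty := ⟨v 0 / 2 - b 0, ⟨0, rfl⟩⟩
  have hLbdd : BddAbove L := by
    refine ⟨v 0 / 2 + b 0, ?_⟩
    rintro x ⟨n, rfl⟩
    exact hpair n 0
  set c : ℝ := sSup L with hc
  have hclb : ∀ n : ℤ, v n / 2 - b n ≤ c := fun n => le_csSup hLbdd ⟨n, rfl⟩
  have hcub : ∀ n : ℤ, c ≤ v n / 2 + b n := by
    intro n
    apply csSup_le hLne
    rintro x ⟨m, rfl⟩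
    exact hpair m n
  refine ⟨fun n => (c - v n / 2) / (2:ℝ) ^ n, fun n => ⟨?_, ?_⟩⟩
  · have hs := hstep n
    have hne : ((2:ℝ) ^ n) ≠ 0 := (h2pos n).ne'
    have hhalf : (2:ℝ) ^ (n-1) = (2:ℝ) ^ n / 2 := by
      rw [zpow_sub_one₀ (by norm_num : (2:ℝ) ≠ 0)]; ring
    show α n = (c - v (n-1) / 2) / (2:ℝ) ^ (n-1) - 2 * ((c - v n / 2) / (2:ℝ) ^ n)
    rw [hhalf]
    field_simp
    linear_combination (-1) * hs
  · have h1 := hclb n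
    have h2 := hcub n
    have hbn : b n = (2:ℝ) ^ n * φ ((2:ℝ) ^ n) := rfl
    rw [hbn] at h1 h2
    show |(c - v n / 2) / (2:ℝ) ^ n| ≤ φ ((2:ℝ) ^ n)
    rw [abs_div, abs_of_pos (h2pos n), div_le_iff₀ (h2pos n), abs_le]
    have e : φ ((2:ℝ) ^ n) * (2:ℝ) ^ n = (2:ℝ) ^ n * φ ((2:ℝ) ^ n) := mul_comm _ _
    constructor <;> linarith
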